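/- Let β̂ minimize β ↦ ‖Y − Xβ‖_n + λΩ(β) over ℝ^p with ‖ε‖_n > 0 and ‖ε̂‖_n ≠ 0, where ε̂ := Y − Xβ̂. Then the prediction error satisfies ‖X(β̂ − β⁰)‖_n ≤ ‖ε‖_n · √( λ⁰/λ + 2(λ⁰/λ)f + (‖ε̂‖_n/‖ε‖_n)·f ). -/

import Mathlib

open scoped BigOperators

/-- The normalized norm `‖a‖_n = sqrt( (∑ a_j^2) / n )`. -/
noncomputable def normN {n : ℕ} (a : Fin n → ℝ) : ℝ :=
  Real.sqrt ((∑ j, a j ^ 2) / n)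

/-- `Ω` is a norm on `ℝ^p`. -/
def IsNorm {p : ℕ} (Ω : (Fin p → ℝ) → ℝ) : Prop :=
  (∀ x y, Ω (x + y) ≤ Ω x + Ω y) ∧
  (∀ (c : ℝ) (x), Ω (c • x) = |c| * Ω x) ∧
  (∀ x, Ω x = 0 → x = 0)

/-- The dual norm `Ω*(x) = max_{Ω(z) ≤ 1} zᵀx`. -/
noncomputable def dualNorm {p : ℕ} (Ω : (Fin p → ℝ) → ℝ) (x : Fin p → ℝ) : ℝ :=
  sSup {r | ∃ z, Ω z ≤ 1 ∧ r = ∑ i, z i * x i}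

/-- `β_S` : the restriction of `β` to `S`, extended by zero off `S`. -/
def restrict {p : ℕ} (S : Finset (Fin p)) (β : Fin p → ℝ) : Fin p → ℝ :=
  fun i => if i ∈ S then β i else 0

/-- `Ω'` is a norm on the coordinates in `Sᶜ` (definiteness is required only for
vectors vanishing on `S`). -/
def IsNormOn {p : ℕ} (S : Finset (Fin p)) (Ω' : (Fin p → ℝ) → ℝ) : Prop :=
  (∀ x y, Ω' (x + y) ≤ Ω' x + Ω' y) ∧
  (∀ (c : ℝ) (x), Ω' (c • x) = |c| * Ω' x) ∧
  (∀ x, (∀ i ∈ S, x i = 0) → Ω' x = 0 → x = 0)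

/-- `Ω` is weakly decomposable for the (allowed) set `S`, with associated norm `Ωc`
on the coordinates in `Sᶜ`. -/
def WeaklyDecomposable {p : ℕ} (Ω : (Fin p → ℝ) → ℝ) (S : Finset (Fin p))
    (Ωc : (Fin p → ℝ) → ℝ) : Prop :=
  IsNorm Ω ∧ IsNormOn S Ωc ∧
  ∀ β : Fin p → ℝ, Ω (restrict S β) + Ωc (restrict Sᶜ β) ≤ Ω β

/-- The `Ω`-eigenvalue `δ_Ω(L,S)`. -/
noncomputable def omegaEigen {n p : ℕ} (X : Matrix (Fin n) (Fin p) ℝ)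
    (Ω Ωc : (Fin p → ℝ) → ℝ) (S : Finset (Fin p)) (L : ℝ) : ℝ :=
  sInf {r | ∃ β : Fin p → ℝ, Ω (restrict S β) = 1 ∧ Ωc (restrict Sᶜ β) ≤ L ∧
    r = normN (X.mulVec (restrict S β) - X.mulVec (restrict Sᶜ β))}

/-- The `Ω`-effective sparsity `Γ_Ω²(L,S) = 1/δ_Ω²(L,S)`. -/
noncomputable def effSparsity {n p : ℕ} (X : Matrix (Fin n) (Fin p) ℝ)
    (Ω Ωc : (Fin p → ℝ) → ℝ) (S : Finset (Fin p)) (L : ℝ) : ℝ :=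
  1 / (omegaEigen X Ω Ωc S L) ^ 2

lemma omega_zero {p : ℕ} {Ω : (Fin p → ℝ) → ℝ} (hΩ : IsNorm Ω) : Ω 0 = 0 := by
  have := hΩ.2.1 0 0
  simpa using this

lemma omega_nonneg {p : ℕ} {Ω : (Fin p → ℝ) → ℝ} (hΩ : IsNorm Ω) (x : Fin p → ℝ) :
    0 ≤ Ω x := by
  have h1 := hΩ.1 x (-x)
  have h2 : Ω (-x) = Ω x := by
    have := hΩ.2.1 (-1) x
    simpa using this
  have h0 : Ω (x + -x) = 0 := by simpa using omega_zero hΩ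
  nlinarith [h1, h2, h0]

lemma omega_sum_le {p : ℕ} {Ω : (Fin p → ℝ) → ℝ} (hΩ : IsNorm Ω)
    {ι : Type*} (s : Finset ι) (g : ι → (Fin p → ℝ)) :
    Ω (∑ i ∈ s, g i) ≤ ∑ i ∈ s, Ω (g i) := by
  classical
  induction s using Finset.induction with
  | empty => simp [omega_zero hΩ]
  | insert _ _ hi ih =>
    rw [Finset.sum_insert hi, Finset.sum_insert hi]
    exact le_trans (hΩ.1 _ _) (by linarith)

lemma omega_lipschitz_bound {p : ℕ} {Ω : (Fin p → ℝ) → ℝ} (hΩ : IsNorm Ω)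
    (w : Fin p → ℝ) : Ω w ≤ (∑ i, Ω (Pi.single i 1)) * ‖w‖ := by
  have hw : w = ∑ i, (w i) • (Pi.single i (1:ℝ) : Fin p → ℝ) := by
    funext j
    simp [Pi.single_apply, Finset.sum_apply, mul_comm]
  calc Ω w = Ω (∑ i, (w i) • (Pi.single i (1:ℝ) : Fin p → ℝ)) := by rw [← hw]
    _ ≤ ∑ i, Ω ((w i) • (Pi.single i (1:ℝ) : Fin p → ℝ)) := omega_sum_le hΩ _ _
    _ = ∑ i, |w i| * Ω (Pi.single i 1) := by simp [hΩ.2.1]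
    _ ≤ ∑ i, ‖w‖ * Ω (Pi.single i 1) := by
        apply Finset.sum_le_sum
        intro i _
        have h1 : |w i| ≤ ‖w‖ := by
          simpa [Real.norm_eq_abs] using norm_le_pi_norm w i
        exact mul_le_mul_of_nonneg_right h1 (omega_nonneg hΩ _)
    _ = (∑ i, Ω (Pi.single i 1)) * ‖w‖ := by rw [Finset.sum_mul]; simp [mul_comm]

lemma omega_continuous {p : ℕ} {Ω : (Fin p → ℝ) → ℝ} (hΩ : IsNorm Ω) :
    Continuous Ω := by
  set C := ∑ i, Ω (Pi.single i (1:ℝ)) with hC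
  have hC0 : 0 ≤ C := Finset.sum_nonneg fun i _ => omega_nonneg hΩ _
  apply LipschitzWith.continuous (K := Real.toNNReal C)
  apply LipschitzWith.of_dist_le_mul
  intro a b
  have hab : Ω a - Ω b ≤ Ω (a - b) := by
    have h := hΩ.1 b (a - b)
    simp at h
    linarith
  have hba : Ω b - Ω a ≤ Ω (a - b) := by
    have h1 := hΩ.1 a (b - a)
    have h2 : Ω (b - a) = Ω (a - b) := by
      have := hΩ.2.1 (-1) (a - b)
      simpa [neg_sub] using this
    rw [h2] at h1
    simp at h1
    linarith
  have habs : |Ω a - Ω b| ≤ Ω (a - b) := abs_sub_le_iff.mpr ⟨hab, hba⟩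
  have hb := omega_lipschitz_bound hΩ (a - b)
  rw [Real.dist_eq, dist_eq_norm]
  calc |Ω a - Ω b| ≤ C * ‖a - b‖ := le_trans habs hb
    _ = (Real.toNNReal C : ℝ) * ‖a - b‖ := by rw [Real.coe_toNNReal C hC0]

/-- The unit Ω-ball gives bounded linear values. -/
lemma dual_bdd {p : ℕ} {Ω : (Fin p → ℝ) → ℝ} (hΩ : IsNorm Ω) (x : Fin p → ℝ) :
    ∃ C : ℝ, 0 ≤ C ∧ ∀ z, Ω z ≤ 1 → (∑ i, z i * x i) ≤ C := by
  rcases Nat.eq_zero_or_pos p with hp | hp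
  · exact ⟨0, le_refl 0, fun z _ => by subst hp; simp⟩
  haveI : Nonempty (Fin p) := ⟨⟨0, hp⟩⟩
  -- min of Ω on the unit sphere
  have hsc : IsCompact (Metric.sphere (0 : Fin p → ℝ) 1) := isCompact_sphere 0 1
  have hsn : (Metric.sphere (0 : Fin p → ℝ) 1).Nonempty :=
    NormedSpace.sphere_nonempty.mpr zero_le_one
  obtain ⟨z₀, hz₀s, hz₀min⟩ := hsc.exists_isMinOn hsn (omega_continuous hΩ).continuousOn
  set m := Ω z₀ with hm
  have hz₀n : z₀ ≠ 0 := by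
    intro h
    rw [mem_sphere_iff_norm, h] at hz₀s
    simp at hz₀s
  have hm0 : 0 < m := by
    rcases lt_or_eq_of_le (omega_nonneg hΩ z₀) with h | h
    · exact h
    · exact absurd (hΩ.2.2 z₀ h.symm) hz₀n
  refine ⟨(∑ i, |x i|) / m, by positivity, fun z hz => ?_⟩
  have hznorm : ‖z‖ ≤ 1 / m := by
    rcases eq_or_ne z 0 with rfl | hzn
    · simp; positivity
    · have hzpos : (0:ℝ) < ‖z‖ := norm_pos_iff.mpr hzn
      have hmem : ‖z‖⁻¹ • z ∈ Metric.sphere (0 : Fin p → ℝ) 1 := by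
        rw [mem_sphere_iff_norm, sub_zero, norm_smul]
        simp [abs_of_pos (inv_pos.mpr hzpos), inv_mul_cancel₀ hzpos.ne']
      have hmin := hz₀min hmem
      have : m ≤ ‖z‖⁻¹ * Ω z := by
        have := hΩ.2.1 (‖z‖⁻¹) z
        rw [abs_of_pos (inv_pos.mpr hzpos)] at this
        simpa [this] using hmin
      have h2 : m * ‖z‖ ≤ Ω z := by
        rw [mul_comm] at this
        calc m * ‖z‖ ≤ (‖z‖⁻¹ * Ω z) * ‖z‖ := by nlinarith
          _ = Ω z := by field_simp
      rw [le_div_iff₀ hm0]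
      calc ‖z‖ * m = m * ‖z‖ := mul_comm _ _
        _ ≤ Ω z := h2
        _ ≤ 1 := hz
  calc (∑ i, z i * x i) ≤ ∑ i, |z i| * |x i| := by
        apply Finset.sum_le_sum; intro i _
        calc z i * x i ≤ |z i * x i| := le_abs_self _
          _ = |z i| * |x i| := abs_mul _ _
    _ ≤ ∑ i, ‖z‖ * |x i| := by
        apply Finset.sum_le_sum; intro i _
        exact mul_le_mul_of_nonneg_right
          (by simpa [Real.norm_eq_abs] using norm_le_pi_norm z i) (abs_nonneg _)
    _ = ‖z‖ * ∑ i, |x i| := by rw [Finset.mul_sum]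
    _ ≤ (1/m) * ∑ i, |x i| := by
        apply mul_le_mul_of_nonneg_right hznorm (Finset.sum_nonneg fun i _ => abs_nonneg _)
    _ = (∑ i, |x i|) / m := by ring

lemma dualNorm_nonneg {p : ℕ} {Ω : (Fin p → ℝ) → ℝ} (hΩ : IsNorm Ω) (x : Fin p → ℝ) :
    0 ≤ dualNorm Ω x := by
  obtain ⟨C, hC0, hC⟩ := dual_bdd hΩ x
  apply le_csSup
  · exact ⟨C, by rintro r ⟨z, hz, rfl⟩; exact hC z hz⟩
  · exact ⟨0, by simp [omega_zero hΩ]⟩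

lemma dualNorm_bound {p : ℕ} {Ω : (Fin p → ℝ) → ℝ} (hΩ : IsNorm Ω) (x u : Fin p → ℝ) :
    (∑ i, u i * x i) ≤ dualNorm Ω x * Ω u := by
  obtain ⟨C, hC0, hC⟩ := dual_bdd hΩ x
  have hbdd : BddAbove {r | ∃ z, Ω z ≤ 1 ∧ r = ∑ i, z i * x i} :=
    ⟨C, by rintro r ⟨z, hz, rfl⟩; exact hC z hz⟩
  rcases eq_or_ne (Ω u) 0 with h0 | h0
  · have := hΩ.2.2 u h0
    subst this
    simp [h0]
  · have hpos : 0 < Ω u := lt_of_le_of_ne (omega_nonneg hΩ u) (Ne.symm h0)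
    have hz1 : Ω ((Ω u)⁻¹ • u) = 1 := by
      rw [hΩ.2.1, abs_of_pos (inv_pos.mpr hpos), inv_mul_cancel₀ h0]
    have hmem : (∑ i, ((Ω u)⁻¹ • u) i * x i) ∈
        {r | ∃ z, Ω z ≤ 1 ∧ r = ∑ i, z i * x i} := ⟨_, le_of_eq hz1, rfl⟩
    have hle := le_csSup hbdd hmem
    have heq : (∑ i, ((Ω u)⁻¹ • u) i * x i) = (Ω u)⁻¹ * ∑ i, u i * x i := by
      rw [Finset.mul_sum]
      congr 1; funext i; simp [mul_assoc]
    rw [heq] at hle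
    calc (∑ i, u i * x i) = Ω u * ((Ω u)⁻¹ * ∑ i, u i * x i) := by field_simp
      _ ≤ Ω u * dualNorm Ω x := mul_le_mul_of_nonneg_left hle (le_of_lt hpos)
      _ = dualNorm Ω x * Ω u := mul_comm _ _


set_option maxHeartbeats 2000000 in
/-- bound on the prediction error
`‖X(β̂ - β⁰)‖_n ≤ ‖ε‖_n √(λ⁰/λ + 2(λ⁰/λ)f + (‖ε̂‖_n/‖ε‖_n) f)`. -/
theorem prediction_error_bound {n p : ℕ} (Y ε : Fin n → ℝ)
    (X : Matrix (Fin n) (Fin p) ℝ) (β0 : Fin p → ℝ) (hY : Y = X.mulVec β0 + ε)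
    (Ω : (Fin p → ℝ) → ℝ) (hΩ : IsNorm Ω) (lam : ℝ) (hlam : 0 < lam)
    (bh : Fin p → ℝ)
    (hmin : ∀ β : Fin p → ℝ,
      normN (Y - X.mulVec bh) + lam * Ω bh ≤ normN (Y - X.mulVec β) + lam * Ω β)
    (f lam0 : ℝ)
    (hf : f = lam * Ω β0 / normN ε)
    (hlam0 : lam0 = dualNorm Ω (Matrix.vecMul ε X) / (n * normN ε))
    (hε : 0 < normN ε) (hεh : normN (Y - X.mulVec bh) ≠ 0) :
    normN (X.mulVec (bh - β0))
      ≤ normN ε * Real.sqrt (lam0 / lam + 2 * (lam0 / lam) * f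
          + (normN (Y - X.mulVec bh) / normN ε) * f) := by
  have hnormN_nonneg : ∀ (a : Fin n → ℝ), 0 ≤ normN a := fun a => Real.sqrt_nonneg _
  have hn : (0:ℝ) < (n:ℝ) := by
    rcases Nat.eq_zero_or_pos n with h | h
    · exfalso
      rw [normN] at hε
      subst h
      norm_num at hε
    · exact_mod_cast h
  have hsq : ∀ a : Fin n → ℝ, normN a ^ 2 = (∑ j, a j ^ 2) / n := by
    intro a
    rw [normN, Real.sq_sqrt]
    positivity
  set E := Y - X.mulVec bh with hE
  set v := X.mulVec (bh - β0) with hv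
  have hEpos : 0 < normN E := lt_of_le_of_ne (hnormN_nonneg E) (Ne.symm hεh)
  have hvj : ∀ j, v j = ε j - E j := by
    intro j
    rw [hv, hE, hY, Matrix.mulVec_sub]
    simp [Matrix.mulVec_add]
    ring
  obtain ⟨qvv, hqvv⟩ : ∃ q : ℝ, q = (∑ j, v j ^ 2) / n := ⟨_, rfl⟩
  obtain ⟨qev, hqev⟩ : ∃ q : ℝ, q = (∑ j, ε j * v j) / n := ⟨_, rfl⟩
  obtain ⟨qEv, hqEv⟩ : ∃ q : ℝ, q = (∑ j, E j * v j) / n := ⟨_, rfl⟩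
  have hsplit : qvv = qev - qEv := by
    rw [hqvv, hqev, hqEv, div_sub_div_same]
    congr 1
    rw [← Finset.sum_sub_distrib]
    apply Finset.sum_congr rfl
    intro j _
    rw [hvj j]
    ring
  have hswap : (∑ j, ε j * v j) = ∑ i, (bh - β0) i * (Matrix.vecMul ε X) i := by
    simp only [hv, Matrix.mulVec, Matrix.vecMul, dotProduct, Finset.mul_sum]
    rw [Finset.sum_comm]
    apply Finset.sum_congr rfl
    intro i _
    apply Finset.sum_congr rfl
    intro j _
    ring
  have hΩd : Ω (bh - β0) ≤ Ω bh + Ω β0 := by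
    have h1 := hΩ.1 bh (-β0)
    have h2 : Ω (-β0) = Ω β0 := by
      have := hΩ.2.1 (-1) β0
      simpa using this
    rw [h2] at h1
    simpa [sub_eq_add_neg] using h1
  have hdn : dualNorm Ω (Matrix.vecMul ε X) = lam0 * (n * normN ε) := by
    rw [hlam0]
    field_simp
  have hlam0nn : 0 ≤ lam0 := by
    rw [hlam0]
    exact div_nonneg (dualNorm_nonneg hΩ _) (by positivity)
  have hA : qev ≤ lam0 * normN ε * (Ω bh + Ω β0) := by
    have h1 : (∑ j, ε j * v j) ≤ dualNorm Ω (Matrix.vecMul ε X) * Ω (bh - β0) := by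
      rw [hswap]
      exact dualNorm_bound hΩ _ _
    have h2 : (∑ j, ε j * v j) ≤ lam0 * (n * normN ε) * (Ω bh + Ω β0) := by
      rw [hdn] at h1
      calc (∑ j, ε j * v j) ≤ lam0 * (n * normN ε) * Ω (bh - β0) := h1
        _ ≤ lam0 * (n * normN ε) * (Ω bh + Ω β0) :=
            mul_le_mul_of_nonneg_left hΩd (by positivity)
    rw [hqev, div_le_iff₀ hn]
    calc (∑ j, ε j * v j) ≤ lam0 * (n * normN ε) * (Ω bh + Ω β0) := h2
      _ = lam0 * normN ε * (Ω bh + Ω β0) * n := by ring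
  -- Step B: basic inequality
  have hB : normN E + lam * Ω bh ≤ normN ε + lam * Ω β0 := by
    have h := hmin β0
    have hYβ0 : Y - X.mulVec β0 = ε := by rw [hY]; abel
    rwa [hYβ0] at h
  -- Step C: first order condition via convexity
  obtain ⟨c, hc⟩ : ∃ c : ℝ, c = lam * (Ω bh - Ω β0) := ⟨_, rfl⟩
  have hC : c * normN E ≤ qEv := by
    obtain ⟨t0, ht0⟩ : ∃ t0 : ℝ, t0 = min 1 (normN E / (|c| + 1)) := ⟨_, rfl⟩
    have ht0pos : 0 < t0 := by
      rw [ht0]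
      apply lt_min one_pos
      positivity
    have hkey : ∀ t : ℝ, 0 < t → t ≤ t0 →
        2 * c * normN E - 2 * qEv ≤ t * (qvv - c ^ 2) := by
      intro t htpos ht
      rw [ht0] at ht
      have ht1 : t ≤ 1 := le_trans ht (min_le_left _ _)
      have htc : t * |c| ≤ normN E := by
        have h1 : t ≤ normN E / (|c| + 1) := le_trans ht (min_le_right _ _)
        have h2 : t * (|c| + 1) ≤ normN E := by
          rw [← le_div_iff₀ (by positivity)]
          exact h1
        nlinarith [abs_nonneg c]
      have hEtc : 0 ≤ normN E + t * c := by
        have h : -(t * |c|) ≤ t * c := by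
          have := neg_abs_le c
          nlinarith
        linarith
      obtain ⟨βt, hβt⟩ : ∃ βt : Fin p → ℝ, βt = bh + t • (β0 - bh) := ⟨_, rfl⟩
      have hYβt : Y - X.mulVec βt = E + t • v := by
        funext j
        rw [hβt]
        simp only [Matrix.mulVec_add, Matrix.mulVec_smul, Matrix.mulVec_sub,
          Pi.add_apply, Pi.sub_apply, Pi.smul_apply, smul_eq_mul, hE, hv,
          Matrix.mulVec_sub]
        ring
      have hΩβt : Ω βt ≤ (1 - t) * Ω bh + t * Ω β0 := by
        have hrw : βt = (1 - t) • bh + t • β0 := by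
          funext j
          rw [hβt]
          simp only [Pi.add_apply, Pi.smul_apply, Pi.sub_apply, smul_eq_mul]
          ring
        rw [hrw]
        calc Ω ((1 - t) • bh + t • β0) ≤ Ω ((1 - t) • bh) + Ω (t • β0) := hΩ.1 _ _
          _ = |1 - t| * Ω bh + |t| * Ω β0 := by rw [hΩ.2.1, hΩ.2.1]
          _ = (1 - t) * Ω bh + t * Ω β0 := by
              rw [abs_of_nonneg (by linarith), abs_of_nonneg htpos.le]
      have hlow : normN E + t * c ≤ normN (E + t • v) := by
        have h := hmin βt
        rw [hYβt] at h
        rw [hc]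
        nlinarith [h, hΩβt]
      have hsqle : (normN E + t * c) ^ 2 ≤ normN (E + t • v) ^ 2 :=
        pow_le_pow_left₀ hEtc hlow 2
      have hexp : normN (E + t • v) ^ 2 = normN E ^ 2 + 2 * t * qEv + t ^ 2 * qvv := by
        rw [hsq, hsq, hqEv, hqvv]
        have h : (∑ j, (E + t • v) j ^ 2)
            = (∑ j, E j ^ 2) + 2 * t * (∑ j, E j * v j) + t ^ 2 * (∑ j, v j ^ 2) := by
          rw [Finset.mul_sum, Finset.mul_sum, ← Finset.sum_add_distrib,
            ← Finset.sum_add_distrib]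
          apply Finset.sum_congr rfl
          intro j _
          simp only [Pi.add_apply, Pi.smul_apply, smul_eq_mul]
          ring
        rw [h]
        ring
      rw [hexp] at hsqle
      have hdiv : t * (2 * c * normN E + t * c ^ 2) ≤ t * (2 * qEv + t * qvv) := by
        nlinarith [hsqle]
      have h2 := (mul_le_mul_iff_right₀ htpos).mp hdiv
      nlinarith [h2]
    have hA0 : 2 * c * normN E - 2 * qEv ≤ 0 := by
      have h : ∀ δ : ℝ, 0 < δ → 2 * c * normN E - 2 * qEv ≤ 0 + δ := by
        intro δ hδ
        obtain ⟨t, ht⟩ : ∃ t : ℝ, t = min t0 (δ / (|qvv - c ^ 2| + 1)) := ⟨_, rfl⟩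
        have htpos : 0 < t := by
          rw [ht]
          exact lt_min ht0pos (by positivity)
        have h1 := hkey t htpos (by rw [ht]; exact min_le_left _ _)
        have h2 : t ≤ δ / (|qvv - c ^ 2| + 1) := by rw [ht]; exact min_le_right _ _
        have h3 : t * (qvv - c ^ 2) ≤ t * |qvv - c ^ 2| :=
          mul_le_mul_of_nonneg_left (le_abs_self _) htpos.le
        have h4 : t * |qvv - c ^ 2| ≤ (δ / (|qvv - c ^ 2| + 1)) * |qvv - c ^ 2| :=
          mul_le_mul_of_nonneg_right h2 (abs_nonneg _)
        have h5 : (δ / (|qvv - c ^ 2| + 1)) * |qvv - c ^ 2| ≤ δ := by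
          rw [div_mul_eq_mul_div, div_le_iff₀ (by positivity)]
          nlinarith [abs_nonneg (qvv - c ^ 2)]
        linarith
      linarith [le_of_forall_pos_le_add h]
    linarith
  -- assemble
  have hT : normN v ^ 2 ≤ normN ε ^ 2 * (lam0 / lam + 2 * (lam0 / lam) * f
      + (normN E / normN ε) * f) := by
    have hRHS : normN ε ^ 2 * (lam0 / lam + 2 * (lam0 / lam) * f
        + (normN E / normN ε) * f)
        = lam0 * normN ε ^ 2 / lam + 2 * lam0 * normN ε * Ω β0
          + lam * normN E * Ω β0 := by
      rw [hf]
      field_simp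
    have hvsq : normN v ^ 2 = qvv := by rw [hsq, hqvv]
    rw [hRHS, hvsq, hsplit]
    have hΩbh : 0 ≤ Ω bh := omega_nonneg hΩ bh
    have hΩβ0 : 0 ≤ Ω β0 := omega_nonneg hΩ β0
    have h3 : lam * Ω bh ≤ normN ε + lam * Ω β0 := by linarith [hEpos]
    have h4 : lam0 * normN ε * (lam * Ω bh) ≤ lam0 * normN ε * (normN ε + lam * Ω β0) :=
      mul_le_mul_of_nonneg_left h3 (by positivity)
    have h5 : lam0 * normN ε * Ω bh ≤ lam0 * normN ε ^ 2 / lam + lam0 * normN ε * Ω β0 := by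
      rw [← sub_nonneg]
      have h6 : 0 ≤ (lam0 * normN ε * (normN ε + lam * Ω β0)
          - lam0 * normN ε * (lam * Ω bh)) / lam := by
        rw [← sub_nonneg] at h4
        positivity
      calc (0:ℝ) ≤ (lam0 * normN ε * (normN ε + lam * Ω β0)
          - lam0 * normN ε * (lam * Ω bh)) / lam := h6
        _ = lam0 * normN ε ^ 2 / lam + lam0 * normN ε * Ω β0
            - lam0 * normN ε * Ω bh := by field_simp
    have h6 : 0 ≤ lam * normN E * Ω bh := by positivity
    have hC' : lam * normN E * (Ω bh - Ω β0) ≤ qEv := by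
      rw [hc] at hC
      nlinarith [hC]
    nlinarith [hA, hC', h5, h6]
  have hR0 : 0 ≤ lam0 / lam + 2 * (lam0 / lam) * f + (normN E / normN ε) * f := by
    by_contra hneg
    push_neg at hneg
    have h1 : normN ε ^ 2 * (lam0 / lam + 2 * (lam0 / lam) * f
        + (normN E / normN ε) * f) < 0 :=
      mul_neg_of_pos_of_neg (by positivity) hneg
    have h2 : 0 ≤ normN v ^ 2 := sq_nonneg _
    linarith
  calc normN v = Real.sqrt (normN v ^ 2) := by
        rw [Real.sqrt_sq (hnormN_nonneg v)]
    _ ≤ Real.sqrt (normN ε ^ 2 * (lam0 / lam + 2 * (lam0 / lam) * f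
          + (normN E / normN ε) * f)) := Real.sqrt_le_sqrt hT
    _ = normN ε * Real.sqrt (lam0 / lam + 2 * (lam0 / lam) * f
          + (normN E / normN ε) * f) := by
        rw [Real.sqrt_mul (sq_nonneg _), Real.sqrt_sq hε.le]
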